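/- Let E ⊂ ℝⁿ be a bounded convex set with 0 ∈ Int(E), radii 0 < r_E ≤ R_E with B_{r_E}(0) ⊂ E ⊂ B_{R_E}(0), let δ > 0, and let G(ξ) := ((|ξ|_E − 1)_+ / |ξ|_E) ξ. Then for all ξ, η ∈ ℝⁿ with |ξ|_E ≥ 1 + δ one has |ξ − η| ≤ 3 (R_E/r_E)² (1 + 1/δ) |G(ξ) − G(η)|. -/

import Mathlib

set_option maxHeartbeats 1000000


open Set Metric

noncomputable def Gfun {n : ℕ} (E : Set (EuclideanSpace ℝ (Fin n)))
    (ξ : EuclideanSpace ℝ (Fin n)) : EuclideanSpace ℝ (Fin n) :=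
  (max (gauge E ξ - 1) 0 / gauge E ξ) • ξ

theorem Gfun_lower_lipschitz {n : ℕ} (E : Set (EuclideanSpace ℝ (Fin n)))
    (hconv : Convex ℝ E) (hbdd : Bornology.IsBounded E) (h0 : (0 : EuclideanSpace ℝ (Fin n)) ∈ interior E)
    (r_E R_E : ℝ) (hr : 0 < r_E) (hrR : r_E ≤ R_E)
    (hball₁ : Metric.ball (0 : EuclideanSpace ℝ (Fin n)) r_E ⊆ E)
    (hball₂ : E ⊆ Metric.ball (0 : EuclideanSpace ℝ (Fin n)) R_E)
    (δ : ℝ) (hδ : 0 < δ) (ξ η : EuclideanSpace ℝ (Fin n)) (hξ : 1 + δ ≤ gauge E ξ) :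
    ‖ξ - η‖ ≤ 3 * (R_E / r_E) ^ 2 * (1 + 1 / δ) * ‖Gfun E ξ - Gfun E η‖ := by
  have hR : 0 < R_E := hr.trans_le hrR
  have habs : Absorbent ℝ E := absorbent_nhds_zero (mem_interior_iff_mem_nhds.mp h0)
  have hub : ∀ x : EuclideanSpace ℝ (Fin n), gauge E x ≤ ‖x‖ / r_E := by
    intro x
    have := gauge_mono (absorbent_nhds_zero (Metric.ball_mem_nhds 0 hr)) hball₁ x
    rwa [gauge_ball hr.le] at this
  have hlb : ∀ x : EuclideanSpace ℝ (Fin n), ‖x‖ / R_E ≤ gauge E x := by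
    intro x
    have := gauge_mono habs hball₂ x
    rwa [gauge_ball hR.le] at this
  have hnorm_le : ∀ x : EuclideanSpace ℝ (Fin n), ‖x‖ ≤ R_E * gauge E x := by
    intro x
    have := hlb x
    rw [div_le_iff₀ hR] at this
    linarith [this]
  have hnorm_ge : ∀ x : EuclideanSpace ℝ (Fin n), r_E * gauge E x ≤ ‖x‖ := by
    intro x
    have := hub x
    rw [le_div_iff₀ hr] at this
    linarith [this]
  set a := gauge E ξ with ha_def
  set b := gauge E η with hb_def
  have ha1 : (1 : ℝ) < a := by linarith
  have ha0 : (0 : ℝ) < a := by linarith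
  have hb0 : (0 : ℝ) ≤ b := gauge_nonneg η
  have hfraca : (0:ℝ) ≤ (a - 1) / a := div_nonneg (by linarith) ha0.le
  have hGξ : Gfun E ξ = ((a - 1) / a) • ξ := by
    rw [Gfun, max_eq_left (by linarith : (0:ℝ) ≤ a - 1)]
  set ρ := R_E / r_E with hρ_def
  have hρ : (1 : ℝ) ≤ ρ := (one_le_div hr).mpr hrR
  have hρ0 : (0 : ℝ) < ρ := by linarith
  have hK : (0:ℝ) < 3 * ρ ^ 2 * (1 + 1 / δ) := by positivity
  have h1δ : a ≤ (1 + 1/δ) * (a - 1) := by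
    rw [← sub_nonneg]
    have e : (1 + 1/δ) * (a - 1) - a = (a - 1 - δ) / δ := by field_simp; ring
    rw [e]
    have : 0 ≤ a - 1 - δ := by linarith
    positivity
  by_cases hb1 : b ≤ 1
  · -- Gfun E η = 0
    have hGη : Gfun E η = 0 := by
      rw [Gfun, max_eq_right (by linarith : b - 1 ≤ (0:ℝ)), zero_div, zero_smul]
    rw [hGη, sub_zero, hGξ, norm_smul, Real.norm_eq_abs, abs_of_nonneg hfraca]
    have h1 : ‖ξ - η‖ ≤ R_E * a + R_E * b := by
      calc ‖ξ - η‖ ≤ ‖ξ‖ + ‖η‖ := norm_sub_le ξ η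
        _ ≤ R_E * a + R_E * b := add_le_add (hnorm_le ξ) (hnorm_le η)
    have h2 : r_E * a ≤ ‖ξ‖ := hnorm_ge ξ
    have e0 : (a - 1) / a * (r_E * a) = r_E * (a - 1) := by
      field_simp
    have key : R_E * a + R_E * b ≤ 3 * ρ ^ 2 * (1 + 1 / δ) * (r_E * (a - 1)) := by
      have e1 : 3 * ρ ^ 2 * (1 + 1 / δ) * (r_E * (a - 1))
          = 3 * (ρ * R_E) * ((1 + 1/δ) * (a - 1)) := by
        rw [hρ_def]; field_simp
      rw [e1]
      have h4 : 3 * (ρ * R_E) * a ≤ 3 * (ρ * R_E) * ((1 + 1/δ) * (a - 1)) :=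
        mul_le_mul_of_nonneg_left h1δ (by positivity)
      have fb : R_E * b ≤ R_E := by nlinarith
      have fa : R_E ≤ R_E * a := by nlinarith
      have f1 : 3 * (R_E * a) ≤ 3 * (ρ * R_E) * a := by
        nlinarith [mul_nonneg (sub_nonneg.mpr hρ) (mul_nonneg hR.le ha0.le)]
      linarith
    calc ‖ξ - η‖ ≤ R_E * a + R_E * b := h1
      _ ≤ 3 * ρ ^ 2 * (1 + 1 / δ) * (r_E * (a - 1)) := key
      _ = 3 * ρ ^ 2 * (1 + 1 / δ) * ((a - 1) / a * (r_E * a)) := by rw [e0]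
      _ ≤ 3 * ρ ^ 2 * (1 + 1 / δ) * ((a - 1) / a * ‖ξ‖) := by
          exact mul_le_mul_of_nonneg_left (mul_le_mul_of_nonneg_left h2 hfraca) hK.le
  · -- case 1 < b
    push_neg at hb1
    have hb0' : (0:ℝ) < b := by linarith
    have hfracb : (0:ℝ) ≤ (b - 1) / b := div_nonneg (by linarith) hb0'.le
    have hGη : Gfun E η = ((b - 1) / b) • η := by
      rw [Gfun, max_eq_left (by linarith : (0:ℝ) ≤ b - 1)]
    set D := ‖Gfun E ξ - Gfun E η‖ with hD
    have hD0 : 0 ≤ D := norm_nonneg _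
    have hgGξ : gauge E (Gfun E ξ) = a - 1 := by
      rw [hGξ, gauge_smul_of_nonneg hfraca, smul_eq_mul, ← ha_def,
        div_mul_cancel₀ _ ha0.ne']
    have hgGη : gauge E (Gfun E η) = b - 1 := by
      rw [hGη, gauge_smul_of_nonneg hfracb, smul_eq_mul, ← hb_def,
        div_mul_cancel₀ _ hb0'.ne']
    have hab : |a - b| ≤ D / r_E := by
      rw [abs_le]
      constructor
      · have := gauge_add_le hconv habs (Gfun E η - Gfun E ξ) (Gfun E ξ)
        rw [sub_add_cancel, hgGξ, hgGη] at this
        have h2 := hub (Gfun E η - Gfun E ξ)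
        have h3 : ‖Gfun E η - Gfun E ξ‖ = D := by rw [hD, norm_sub_rev]
        rw [h3] at h2
        linarith
      · have := gauge_add_le hconv habs (Gfun E ξ - Gfun E η) (Gfun E η)
        rw [sub_add_cancel, hgGξ, hgGη] at this
        have h2 := hub (Gfun E ξ - Gfun E η)
        linarith
    have hdec : ξ - η = (Gfun E ξ - Gfun E η) + ((1/a) • (ξ - η) + ((1/a - 1/b)) • η) := by
      rw [hGξ, hGη]
      have e1 : (a - 1)/a = 1 - 1/a := by field_simp
      have e2 : (b - 1)/b = 1 - 1/b := by field_simp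
      rw [e1, e2]
      module
    have hnd : ‖ξ - η‖ ≤ D + (1/a * ‖ξ - η‖ + |1/a - 1/b| * ‖η‖) := by
      calc ‖ξ - η‖ = ‖(Gfun E ξ - Gfun E η) + ((1/a) • (ξ - η) + ((1/a - 1/b)) • η)‖ := by
            rw [← hdec]
        _ ≤ D + ‖(1/a) • (ξ - η) + ((1/a - 1/b)) • η‖ := norm_add_le _ _
        _ ≤ D + (‖(1/a) • (ξ - η)‖ + ‖((1/a - 1/b)) • η‖) := by
            gcongr; exact norm_add_le _ _
        _ = D + (1/a * ‖ξ - η‖ + |1/a - 1/b| * ‖η‖) := by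
            rw [norm_smul, norm_smul, Real.norm_eq_abs, Real.norm_eq_abs,
              abs_of_nonneg (one_div_nonneg.mpr ha0.le)]
    have hηn : ‖η‖ ≤ R_E * b := hnorm_le η
    have hABpos : (0:ℝ) < a * b := mul_pos ha0 hb0'
    have habd : |1/a - 1/b| * ‖η‖ ≤ ρ * D / a := by
      have e2 : (1:ℝ)/a - 1/b = (b - a) / (a * b) := by field_simp
      have e : |1/a - 1/b| = |a - b| / (a * b) := by
        rw [e2, abs_div, abs_of_pos hABpos, abs_sub_comm]
      rw [e]
      calc |a - b| / (a * b) * ‖η‖ ≤ (D / r_E) / (a * b) * (R_E * b) :=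
            mul_le_mul ((div_le_div_iff_of_pos_right hABpos).mpr hab) hηn (norm_nonneg _)
              (div_nonneg (div_nonneg hD0 hr.le) hABpos.le)
        _ = ρ * D / a := by rw [hρ_def]; field_simp
    clear_value a b
    set N := ‖ξ - η‖ with hN_def
    set T := |1/a - 1/b| * ‖η‖ with hT_def
    have step : a * N ≤ a * D + N + ρ * D := by
      have h1 := mul_le_mul_of_nonneg_left hnd ha0.le
      have e : a * (D + (1/a * N + T)) = a * D + (a * (1/a)) * N + a * T := by ring
      rw [e, mul_one_div_cancel ha0.ne', one_mul] at h1
      have h2 : a * T ≤ ρ * D := by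
        have := (le_div_iff₀ ha0).mp habd
        linarith [mul_comm a T, this]
      linarith
    have hKa : a + ρ ≤ 3 * ρ ^ 2 * (1 + 1 / δ) * (a - 1) := by
      nlinarith [mul_le_mul_of_nonneg_left h1δ (by positivity : (0:ℝ) ≤ 3 * ρ ^ 2),
        hρ, ha1, sq_nonneg (ρ - 1), mul_pos hρ0 ha0]
    have hfin : (a - 1) * N ≤ (a - 1) * (3 * ρ ^ 2 * (1 + 1 / δ) * D) := by
      calc (a - 1) * N ≤ (a + ρ) * D := by nlinarith [step]
        _ ≤ 3 * ρ ^ 2 * (1 + 1 / δ) * (a - 1) * D := mul_le_mul_of_nonneg_right hKa hD0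
        _ = (a - 1) * (3 * ρ ^ 2 * (1 + 1 / δ) * D) := by ring
    exact (mul_le_mul_iff_right₀ (by linarith : (0:ℝ) < a - 1)).mp hfin
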